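/- Let $v : [0,T] \to \mathbb{R}$ be a nonnegative differentiable function satisfying $v'(t) \le L v(t) + C(t) v(t)^{1/2}$ for all $t \in [0,T]$, where $L \in \mathbb{R}$ and $C : [0,T] \to \mathbb{R}$ is continuous and nonnegative. Then for all $t \in [0,T]$, $v(t) \le \left( v(0)^{1/2} e^{Lt/2} + \tfrac{1}{2}\int_0^t C(s) e^{L(t-s)/2}\, ds \right)^2$. -/

import Mathlib

open Set Real intervalIntegral

theorem stmt_8 {T L : ℝ} (hT : 0 ≤ T) (v v' C : ℝ → ℝ)
    (hv0 : ∀ t ∈ Set.Icc 0 T, 0 ≤ v t)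
    (hderiv : ∀ t ∈ Set.Icc 0 T, HasDerivAt v (v' t) t)
    (hC : ContinuousOn C (Set.Icc 0 T))
    (hC0 : ∀ t ∈ Set.Icc 0 T, 0 ≤ C t)
    (hineq : ∀ t ∈ Set.Icc 0 T, v' t ≤ L * v t + C t * Real.sqrt (v t)) :
    ∀ t ∈ Set.Icc 0 T,
      v t ≤ (Real.sqrt (v 0) * Real.exp (L * t / 2)
        + (1 / 2) * ∫ s in (0:ℝ)..t, C s * Real.exp (L * (t - s) / 2)) ^ 2 := by
  -- Extend C continuously to all of ℝ
  set D : ℝ → ℝ := fun u => C (Set.projIcc 0 T hT u : ℝ) with hD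
  have hDcont : Continuous D := by
    apply hC.comp_continuous (continuous_subtype_val.comp (continuous_projIcc))
    intro x
    exact (Set.projIcc 0 T hT x).2
  have hDeq : ∀ u ∈ Set.Icc 0 T, D u = C u := by
    intro u hu
    simp [hD, Set.projIcc_of_mem hT hu]
  have hD0 : ∀ u, 0 ≤ D u := fun u => hC0 _ (Set.projIcc 0 T hT u).2
  -- Continuity of v on Icc
  have hvcont : ContinuousOn v (Set.Icc 0 T) := fun s hs =>
    ((hderiv s hs).continuousAt).continuousWithinAt
  -- Main ε-inequality
  have key : ∀ ε > (0:ℝ), ∀ t ∈ Set.Icc 0 T,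
      Real.sqrt (v t + ε ^ 2) ≤ Real.exp (L * t / 2) *
        (Real.sqrt (v 0 + ε ^ 2) +
          ∫ u in (0:ℝ)..t, (D u / 2 + (|L| + 1) * ε / 2) * Real.exp (-(L * u) / 2)) := by
    intro ε hε
    set δ : ℝ := (|L| + 1) * ε / 2 with hδ
    set g : ℝ → ℝ := fun u => (D u / 2 + δ) * Real.exp (-(L * u) / 2) with hg
    have hgcont : Continuous g := by
      exact ((hDcont.div_const 2).add continuous_const).mul
        (((continuous_const.mul continuous_id).neg.div_const 2).rexp)
    set B : ℝ → ℝ := fun s => Real.exp (L * s / 2) *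
      (Real.sqrt (v 0 + ε ^ 2) + ∫ u in (0:ℝ)..s, g u) with hB
    set B' : ℝ → ℝ := fun s => L / 2 * B s + (D s / 2 + δ) with hB'
    have hBderiv : ∀ s, HasDerivAt B (B' s) s := by
      intro s
      have h1 : HasDerivAt (fun s => Real.exp (L * s / 2)) (L / 2 * Real.exp (L * s / 2)) s := by
        have := (((hasDerivAt_id s).const_mul L).div_const 2).exp
        simpa [mul_comm] using this
      have h2 : HasDerivAt (fun s => Real.sqrt (v 0 + ε ^ 2) + ∫ u in (0:ℝ)..s, g u) (g s) s := by
        simpa using ((hgcont.integral_hasStrictDerivAt 0 s).hasDerivAt.const_add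
          (Real.sqrt (v 0 + ε ^ 2)))
      have : HasDerivAt (fun y => Real.exp (L * y / 2) * (Real.sqrt (v 0 + ε ^ 2) + ∫ u in (0:ℝ)..y, g u)) _ s := h1.mul h2
      convert this using 1
      have hexp : Real.exp (L * s / 2) * Real.exp (-(L * s) / 2) = 1 := by
        rw [← Real.exp_add]; ring_nf; exact Real.exp_zero
      simp only [hB', hB, hg]
      rw [show Real.exp (L * s / 2) * ((D s / 2 + δ) * Real.exp (-(L * s) / 2))
          = (D s / 2 + δ) * (Real.exp (L * s / 2) * Real.exp (-(L * s) / 2)) by ring, hexp]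
      ring
    set w : ℝ → ℝ := fun s => Real.sqrt (v s + ε ^ 2) with hw
    set w' : ℝ → ℝ := fun s => 1 / (2 * Real.sqrt (v s + ε ^ 2)) * v' s with hw'
    have hwpos : ∀ s ∈ Set.Icc 0 T, 0 < v s + ε ^ 2 := fun s hs => by
      have := hv0 s hs; positivity
    have hwderiv : ∀ s ∈ Set.Icc 0 T, HasDerivAt w (w' s) s := by
      intro s hs
      exact (Real.hasDerivAt_sqrt (ne_of_gt (hwpos s hs))).comp s
        ((hderiv s hs).add_const (ε ^ 2))
    have hwcont : ContinuousOn w (Set.Icc 0 T) := fun s hs =>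
      ((hwderiv s hs).continuousAt).continuousWithinAt
    have hinit : w 0 ≤ B 0 := by simp [hw, hB]
    have bound : ∀ x ∈ Set.Ico 0 T, w x = B x → w' x < B' x := by
      intro x hx hwB
      have hxI : x ∈ Set.Icc 0 T := Set.mem_Icc_of_Ico hx
      have hvx := hv0 x hxI
      have hCx := hC0 x hxI
      have hineqx := hineq x hxI
      have hwx : Real.sqrt (v x + ε ^ 2) ^ 2 = v x + ε ^ 2 := Real.sq_sqrt (hwpos x hxI).le
      have hwge : ε ≤ Real.sqrt (v x + ε ^ 2) := by
        have h := Real.sqrt_le_sqrt (show ε ^ 2 ≤ v x + ε ^ 2 by linarith)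
        rwa [Real.sqrt_sq hε.le] at h
      have hsle : Real.sqrt (v x) ≤ Real.sqrt (v x + ε ^ 2) :=
        Real.sqrt_le_sqrt (by nlinarith)
      have hsnn : 0 ≤ Real.sqrt (v x) := Real.sqrt_nonneg _
      have hwpos' : 0 < Real.sqrt (v x + ε ^ 2) := lt_of_lt_of_le hε hwge
      show 1 / (2 * Real.sqrt (v x + ε ^ 2)) * v' x < L / 2 * B x + (D x / 2 + δ)
      rw [← hwB]
      show _ < L / 2 * Real.sqrt (v x + ε ^ 2) + (D x / 2 + δ)
      rw [hDeq x hxI]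
      rw [div_mul_eq_mul_div, one_mul, div_lt_iff₀ (by positivity)]
      have habs : -L * ε ^ 2 ≤ |L| * ε ^ 2 := by
        nlinarith [neg_abs_le L, sq_nonneg ε]
      have hLv : L * v x = L * (Real.sqrt (v x + ε ^ 2)) ^ 2 - L * ε ^ 2 := by
        rw [hwx]; ring
      nlinarith [mul_le_mul_of_nonneg_left hsle hCx, sq_nonneg ε,
        mul_le_mul_of_nonneg_right hwge (by positivity : (0:ℝ) ≤ (|L| + 1) * ε),
        mul_le_mul_of_nonneg_right habs (le_of_lt (inv_pos.mpr hwpos'))]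
    exact fun t ht => image_le_of_deriv_right_lt_deriv_boundary hwcont
      (fun x hx => (hwderiv x (Set.mem_Icc_of_Ico hx)).hasDerivWithinAt)
      hinit hBderiv bound ht
  -- Take the limit ε → 0⁺
  intro t ht
  have ht0 : 0 ≤ t := ht.1
  have hsub : Set.uIcc 0 t ⊆ Set.Icc 0 T := by
    rw [Set.uIcc_of_le ht0]
    exact Set.Icc_subset_Icc le_rfl ht.2
  have hDint : IntervalIntegrable (fun u => D u / 2 * Real.exp (-(L * u) / 2)) MeasureTheory.volume 0 t :=
    (((hDcont.div_const 2).mul ((continuous_const.mul continuous_id).neg.div_const 2).rexp)).intervalIntegrable 0 t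
  have hEint : IntervalIntegrable (fun u => Real.exp (-(L * u) / 2)) MeasureTheory.volume 0 t :=
    (((continuous_const.mul continuous_id).neg.div_const 2).rexp).intervalIntegrable 0 t
  -- limit statement
  have hlim : Real.sqrt (v t) ≤ Real.exp (L * t / 2) *
      (Real.sqrt (v 0) + ∫ u in (0:ℝ)..t, D u / 2 * Real.exp (-(L * u) / 2)) := by
    set Φ : ℝ → ℝ := fun ε => Real.exp (L * t / 2) *
      (Real.sqrt (v 0 + ε ^ 2) + ((∫ u in (0:ℝ)..t, D u / 2 * Real.exp (-(L * u) / 2))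
        + (|L| + 1) * ε / 2 * ∫ u in (0:ℝ)..t, Real.exp (-(L * u) / 2))) with hΦ
    have hΦeq : ∀ ε > (0:ℝ), Real.sqrt (v t + ε ^ 2) ≤ Φ ε := by
      intro ε hε
      have := key ε hε t ht
      have hint : (∫ u in (0:ℝ)..t, (D u / 2 + (|L| + 1) * ε / 2) * Real.exp (-(L * u) / 2))
          = (∫ u in (0:ℝ)..t, D u / 2 * Real.exp (-(L * u) / 2))
            + (|L| + 1) * ε / 2 * ∫ u in (0:ℝ)..t, Real.exp (-(L * u) / 2) := by
        rw [← intervalIntegral.integral_const_mul, ← intervalIntegral.integral_add hDint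
          (hEint.const_mul _)]
        congr 1; ext u; ring
      rw [hΦ]
      rw [hint] at this
      exact this
    have h1 : Filter.Tendsto (fun ε : ℝ => Real.sqrt (v t + ε ^ 2)) (nhdsWithin 0 (Set.Ioi 0))
        (nhds (Real.sqrt (v t))) := by
      have : Continuous (fun ε : ℝ => Real.sqrt (v t + ε ^ 2)) :=
        (continuous_const.add (continuous_pow 2)).sqrt
      simpa using (this.tendsto 0).mono_left nhdsWithin_le_nhds
    have h2 : Filter.Tendsto Φ (nhdsWithin 0 (Set.Ioi 0))
        (nhds (Real.exp (L * t / 2) *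
          (Real.sqrt (v 0) + ∫ u in (0:ℝ)..t, D u / 2 * Real.exp (-(L * u) / 2)))) := by
      have hc : Continuous Φ := by
        apply continuous_const.mul
        apply ((continuous_const.add (continuous_pow 2)).sqrt).add
        exact continuous_const.add ((((continuous_const.mul continuous_id).div_const 2)).mul continuous_const)
      have := (hc.tendsto 0).mono_left (nhdsWithin_le_nhds (s := Set.Ioi (0:ℝ)))
      simpa [hΦ] using this
    exact le_of_tendsto_of_tendsto h1 h2
      (Filter.eventually_iff_exists_mem.mpr ⟨Set.Ioi 0, self_mem_nhdsWithin,
        fun ε hε => hΦeq ε hε⟩)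
  -- Rewrite the bound in the desired form
  have hform : Real.exp (L * t / 2) *
      (Real.sqrt (v 0) + ∫ u in (0:ℝ)..t, D u / 2 * Real.exp (-(L * u) / 2))
      = Real.sqrt (v 0) * Real.exp (L * t / 2)
        + (1 / 2) * ∫ s in (0:ℝ)..t, C s * Real.exp (L * (t - s) / 2) := by
    rw [mul_add]
    congr 1
    · ring
    · calc Real.exp (L * t / 2) * ∫ u in (0:ℝ)..t, D u / 2 * Real.exp (-(L * u) / 2)
          = ∫ u in (0:ℝ)..t, Real.exp (L * t / 2) * (D u / 2 * Real.exp (-(L * u) / 2)) :=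
            (intervalIntegral.integral_const_mul _ _).symm
        _ = ∫ s in (0:ℝ)..t, (1:ℝ) / 2 * (C s * Real.exp (L * (t - s) / 2)) := by
            apply intervalIntegral.integral_congr
            intro u hu
            have huI : u ∈ Set.Icc 0 T := hsub hu
            beta_reduce
            rw [hDeq u huI]
            have hh : Real.exp (L * t / 2) * Real.exp (-(L * u) / 2)
                = Real.exp (L * (t - u) / 2) := by
              rw [← Real.exp_add]; ring_nf
            calc Real.exp (L * t / 2) * (C u / 2 * Real.exp (-(L * u) / 2))
                = C u / 2 * (Real.exp (L * t / 2) * Real.exp (-(L * u) / 2)) := by ring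
              _ = 1 / 2 * (C u * Real.exp (L * (t - u) / 2)) := by rw [hh]; ring
        _ = (1:ℝ) / 2 * ∫ s in (0:ℝ)..t, C s * Real.exp (L * (t - s) / 2) :=
            intervalIntegral.integral_const_mul _ _
  rw [hform] at hlim
  have hvt := hv0 t ht
  calc v t = Real.sqrt (v t) ^ 2 := (Real.sq_sqrt hvt).symm
    _ ≤ _ := pow_le_pow_left₀ (Real.sqrt_nonneg _) hlim 2
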